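/- If ‖a‖₁ > R > 0 for a ∈ ℓ²(Λ), then there exists μ > 0 with ‖S_μ(a)‖₁ = R. -/

import Mathlib

open scoped ENNReal NNReal

noncomputable def softThr (τ t : ℝ) : ℝ := Real.sign t * max (|t| - τ) 0

/-- The `ℓ¹` "norm" with value in `ℝ≥0∞` (`∞` when the sequence is not in `ℓ¹`). -/
noncomputable def l1e {I : Type*} (x : I → ℝ) : ℝ≥0∞ := ∑' i, (‖x i‖₊ : ℝ≥0∞)

lemma abs_softThr (μ t : ℝ) (hμ : 0 ≤ μ) : |softThr μ t| = max (|t| - μ) 0 := by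
  unfold softThr
  rcases eq_or_ne t 0 with rfl | ht
  · have h0 : |(0:ℝ)| - μ ≤ 0 := by simp [hμ]
    simp [Real.sign_zero, max_eq_right h0, hμ]
  · rw [abs_mul, abs_of_nonneg (le_max_right (|t| - μ) 0)]
    rcases ht.lt_or_gt with h | h
    · rw [Real.sign_of_neg h]; norm_num
    · rw [Real.sign_of_pos h]; norm_num

set_option maxHeartbeats 800000 in
/-- If `a ∈ ℓ²` and `‖a‖₁ > R > 0`, then there exists `μ > 0` with `‖S_μ(a)‖₁ = R`. -/
theorem stmt4 {I : Type*} [Countable I] (a : I → ℝ) (ha : Memℓp a 2) (R : ℝ) (hR : 0 < R)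
    (haR : ENNReal.ofReal R < l1e a) :
    ∃ μ : ℝ, 0 < μ ∧ ∑' i, |softThr μ (a i)| = R := by
  classical
  have hsum : Summable (fun i => ‖a i‖ ^ ((2:ℝ≥0∞).toReal)) := ha.summable (by norm_num)
  have htend : Filter.Tendsto (fun i => ‖a i‖ ^ ((2:ℝ≥0∞).toReal)) Filter.cofinite (nhds 0) :=
    hsum.tendsto_cofinite_zero
  have hfin : ∀ μ : ℝ, 0 < μ → {i | μ < |a i|}.Finite := by
    intro μ hμ
    have h1 : ∀ᶠ i in Filter.cofinite, ‖a i‖ ^ ((2:ℝ≥0∞).toReal) < μ ^ ((2:ℝ≥0∞).toReal) := by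
      apply htend.eventually_lt_const
      positivity
    rw [Filter.eventually_cofinite] at h1
    apply h1.subset
    intro i hi
    simp only [Set.mem_setOf_eq, not_lt]
    apply Real.rpow_le_rpow hμ.le _ (by norm_num)
    rw [Real.norm_eq_abs]; exact hi.le
  -- get finite set F with R < ∑_F |a i|
  have hsup : ENNReal.ofReal R < ⨆ s : Finset I, ∑ i ∈ s, (‖a i‖₊ : ℝ≥0∞) := by
    rwa [l1e, ENNReal.tsum_eq_iSup_sum] at haR
  obtain ⟨F, hF⟩ := lt_iSup_iff.mp hsup
  have hFr : R < ∑ i ∈ F, |a i| := by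
    have heq : ∑ i ∈ F, (‖a i‖₊ : ℝ≥0∞) = ENNReal.ofReal (∑ i ∈ F, |a i|) := by
      rw [ENNReal.ofReal_sum_of_nonneg (fun i _ => abs_nonneg _)]
      exact Finset.sum_congr rfl fun i _ => by
        rw [← Real.norm_eq_abs, ofReal_norm, enorm_eq_nnnorm]
    rw [heq] at hF
    exact (ENNReal.ofReal_lt_ofReal_iff_of_nonneg hR.le).mp hF
  obtain ⟨μ₁, hμ₁, hμ₁lt⟩ : ∃ μ₁ : ℝ, 0 < μ₁ ∧ (F.card : ℝ) * μ₁ < ∑ i ∈ F, |a i| - R := by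
    have hpos : (0:ℝ) < (F.card : ℝ) + 1 := by positivity
    refine ⟨(∑ i ∈ F, |a i| - R) / ((F.card : ℝ) + 1), div_pos (by linarith) hpos, ?_⟩
    have heq : ((F.card : ℝ) + 1) * ((∑ i ∈ F, |a i| - R) / ((F.card : ℝ) + 1))
        = ∑ i ∈ F, |a i| - R := by field_simp
    nlinarith [div_pos (show (0:ℝ) < ∑ i ∈ F, |a i| - R by linarith) hpos]
  set S : Finset I := (hfin μ₁ hμ₁).toFinset ∪ F with hSdef
  set h : ℝ → ℝ := fun μ => ∑ i ∈ S, max (|a i| - μ) 0 with hhdef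
  have key : ∀ μ : ℝ, μ₁ ≤ μ → ∑' i, |softThr μ (a i)| = h μ := by
    intro μ hμ
    have h0 : ∀ i ∉ S, |softThr μ (a i)| = 0 := by
      intro i hi
      rw [abs_softThr _ _ (hμ₁.le.trans hμ)]
      have : i ∉ (hfin μ₁ hμ₁).toFinset := fun hc => hi (Finset.mem_union_left _ hc)
      rw [Set.Finite.mem_toFinset] at this
      simp only [Set.mem_setOf_eq, not_lt] at this
      apply max_eq_right; linarith
    rw [tsum_eq_sum h0]
    exact Finset.sum_congr rfl fun i _ => abs_softThr _ _ (hμ₁.le.trans hμ)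
  have hcont : Continuous h :=
    continuous_finset_sum _ fun i _ => ((continuous_const.sub continuous_id).max continuous_const)
  set μ₂ : ℝ := μ₁ + ∑ i ∈ S, |a i| with hμ₂def
  have hμ₁₂ : μ₁ ≤ μ₂ := le_add_of_nonneg_right (Finset.sum_nonneg fun i _ => abs_nonneg _)
  have hh2 : h μ₂ = 0 := by
    apply Finset.sum_eq_zero
    intro i hi
    apply max_eq_right
    have h1 : |a i| ≤ ∑ j ∈ S, |a j| := Finset.single_le_sum (f := fun j => |a j|) (fun j _ => abs_nonneg (a j)) hi
    linarith [hμ₁]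
  have hh1 : R < h μ₁ := by
    have hsub : ∑ i ∈ F, max (|a i| - μ₁) 0 ≤ h μ₁ :=
      Finset.sum_le_sum_of_subset_of_nonneg Finset.subset_union_right
        (fun i _ _ => le_max_right _ _)
    have hge : ∑ i ∈ F, (|a i| - μ₁) ≤ ∑ i ∈ F, max (|a i| - μ₁) 0 :=
      Finset.sum_le_sum fun i _ => le_max_left _ _
    have : ∑ i ∈ F, (|a i| - μ₁) = ∑ i ∈ F, |a i| - F.card * μ₁ := by
      rw [Finset.sum_sub_distrib]; simp [mul_comm]
    linarith [hμ₁lt]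
  have hmem : R ∈ Set.Icc (h μ₂) (h μ₁) := ⟨by rw [hh2]; exact hR.le, hh1.le⟩
  obtain ⟨μ, hμmem, hμeq⟩ := intermediate_value_Icc' hμ₁₂ hcont.continuousOn hmem
  exact ⟨μ, hμ₁.trans_le hμmem.1, by rw [key μ hμmem.1]; exact hμeq⟩
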